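/- The prime spectrum of R is normally separated: whenever P_0 ⊊ P_1 are prime two-sided ideals of R, there exists y ∈ P_1 with y ∉ P_0 such that y is normal modulo P_0, i.e. Ry + P_0 = yR + P_0. -/

import Mathlib

/-!
Common setup: `q`-commutative power series ring `R = k_q[[x_1,…,x_n]]` and
`q`-commutative Laurent series ring `L = k_q[[x_1^{±1},…,x_n^{±1}]]`, characterized
by their coefficient descriptions (twisted convolution multiplication).
-/

noncomputable section

/-- A multiplicatively antisymmetric `n × n` matrix over `k`:
`q_{ii} = 1` and `q_{ij} q_{ji} = 1`. -/
structure QMatrix (k : Type*) [Field k] (n : ℕ) where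
  q : Fin n → Fin n → k
  diag : ∀ i, q i i = 1
  antisym : ∀ i j, q i j * q j i = 1

namespace QMatrix

variable {k : Type*} [Field k] {n : ℕ} (Q : QMatrix k n)

lemma q_ne_zero (i j : Fin n) : Q.q i j ≠ 0 := fun h0 => by
  have h1 := Q.antisym i j
  rw [h0, zero_mul] at h1
  exact zero_ne_one h1

/-- The twisting weight `∏_{1 ≤ j < i ≤ n} q_{ij}^{u_i v_j}` (natural exponents), so that
`x^u · x^v = weight u v · x^{u+v}` in `R`. -/
def weight (u v : Fin n →₀ ℕ) : k :=
  ∏ i : Fin n, ∏ j : Fin n, if j < i then Q.q i j ^ (u i * v j) else 1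

/-- The twisting weight `∏_{1 ≤ j < i ≤ n} q_{ij}^{u_i v_j}` (integer exponents), so that
`x^u · x^v = zweight u v · x^{u+v}` in `L`. -/
def zweight (u v : Fin n → ℤ) : k :=
  ∏ i : Fin n, ∏ j : Fin n, if j < i then Q.q i j ^ (u i * v j) else 1

/-- The alternating bicharacter `σ(s,t) = ∏_{i,j} q_{ij}^{s_i t_j}`, so that
`x^s x^t = σ(s,t) x^t x^s` in `L`. -/
def sigma (s t : Fin n → ℤ) : k :=
  ∏ i : Fin n, ∏ j : Fin n, Q.q i j ^ (s i * t j)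

end QMatrix

/-- `R` is (a model of) the `q`-commutative power series ring `k_q[[x_1, …, x_n]]`:
its underlying `k`-vector space is that of all families of coefficients indexed by `ℕ^n`,
the constant series `1` is the multiplicative unit, and multiplication is given by the
twisted convolution: the coefficient of `x^s` in `f·g` is
`∑_{u+v=s} f_u g_v ∏_{1≤j<i≤n} q_{ij}^{u_i v_j}`. -/
structure IsQPowerSeriesRing {k : Type*} [Field k] {n : ℕ} (Q : QMatrix k n)
    (R : Type*) [Ring R] [Algebra k R] where
  coeff : R ≃ₗ[k] ((Fin n →₀ ℕ) → k)
  coeff_one : ∀ s, coeff 1 s = if s = 0 then 1 else 0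
  coeff_mul : ∀ f g : R, ∀ s, coeff (f * g) s =
    ∑ uv ∈ Finset.HasAntidiagonal.antidiagonal s, coeff f uv.1 * coeff g uv.2 * Q.weight uv.1 uv.2

namespace IsQPowerSeriesRing

variable {k : Type*} [Field k] {n : ℕ} {Q : QMatrix k n}
variable {R : Type*} [Ring R] [Algebra k R] (h : IsQPowerSeriesRing Q R)

/-- The monic monomial `x^s` of `R`. -/
def mono (s : Fin n →₀ ℕ) : R :=
  h.coeff.symm (fun t => if t = s then 1 else 0)

/-- The variable `x_i` of `R`. -/
def X (i : Fin n) : R := h.mono (Finsupp.single i 1)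

/-- The augmentation ideal `J = ⟨x_1, …, x_n⟩` of `R`, as a two-sided ideal. -/
def Jideal : TwoSidedIdeal R := TwoSidedIdeal.span (Set.range h.X)

/-- For `w ⊆ {1,…,n}`, the two-sided ideal `J_w = ⟨x_i : i ∈ w⟩` of `R`. -/
def Jw (w : Finset (Fin n)) : TwoSidedIdeal R :=
  TwoSidedIdeal.span {r : R | ∃ i ∈ w, r = h.X i}

/-- The action of `θ ∈ H = (kˣ)^n` on `R`, determined by
`x^s ↦ θ_1^{s_1} ⋯ θ_n^{s_n} x^s` and applied coefficientwise to series. -/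
def hAct (θ : Fin n → kˣ) (f : R) : R :=
  h.coeff.symm (fun s => (∏ i, (θ i : k) ^ (s i)) * h.coeff f s)

/-- A two-sided ideal of `R` is `H`-stable if it is mapped to itself by every element
of the torus `H = (kˣ)^n`. -/
def IsHStable (I : TwoSidedIdeal R) : Prop :=
  ∀ θ : Fin n → kˣ, h.hAct θ '' (I : Set R) = (I : Set R)

end IsQPowerSeriesRing

/-- A coefficient family `c : ℤ^n → k` is Laurent-bounded if `c s = 0` whenever some
coordinate of `s` is sufficiently negative, i.e. `∃ N, min(s_1,…,s_n) < -N → c s = 0`. -/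
def LaurentBounded {k : Type*} [Field k] {n : ℕ} (c : (Fin n → ℤ) → k) : Prop :=
  ∃ N : ℕ, ∀ s : Fin n → ℤ, (∃ i, s i < -(N : ℤ)) → c s = 0

/-- `L` is (a model of) the `q`-commutative Laurent series ring
`k_q[[x_1^{±1}, …, x_n^{±1}]]`: its elements correspond, `k`-linearly, to the
Laurent-bounded coefficient families indexed by `ℤ^n`, the constant series `1` is the
multiplicative unit, and multiplication is given by the twisted convolution. -/
structure IsQLaurentSeriesRing {k : Type*} [Field k] {n : ℕ} (Q : QMatrix k n)
    (L : Type*) [Ring L] [Algebra k L] where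
  coeff : L →ₗ[k] ((Fin n → ℤ) → k)
  coeff_injective : Function.Injective coeff
  coeff_bounded : ∀ f, LaurentBounded (coeff f)
  coeff_surjective : ∀ c, LaurentBounded c → ∃ f, coeff f = c
  coeff_one : ∀ s, coeff 1 s = if s = 0 then 1 else 0
  mul_support_finite : ∀ f g : L, ∀ s : Fin n → ℤ,
    (Function.support fun u => coeff f u * coeff g (s - u) * Q.zweight u (s - u)).Finite
  coeff_mul : ∀ f g : L, ∀ s : Fin n → ℤ, coeff (f * g) s =
    ∑ᶠ u : Fin n → ℤ, coeff f u * coeff g (s - u) * Q.zweight u (s - u)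

namespace IsQLaurentSeriesRing

variable {k : Type*} [Field k] {n : ℕ} {Q : QMatrix k n}
variable {L : Type*} [Ring L] [Algebra k L] (h : IsQLaurentSeriesRing Q L)

/-- The action of `θ ∈ H = (kˣ)^n` on `L`, determined by
`x^s ↦ θ_1^{s_1} ⋯ θ_n^{s_n} x^s` and applied coefficientwise to series. -/
def hAct (θ : Fin n → kˣ) (f : L) : L :=
  Classical.choose (h.coeff_surjective
    (fun s => (∏ i, ((θ i ^ (s i) : kˣ) : k)) * h.coeff f s)
    (by
      obtain ⟨N, hN⟩ := h.coeff_bounded f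
      exact ⟨N, fun s hs => by simp only []; rw [hN s hs, mul_zero]⟩))

/-- A two-sided ideal of `L` is `H`-stable if it is mapped to itself by every element
of the torus `H = (kˣ)^n`. -/
def IsHStable (I : TwoSidedIdeal L) : Prop :=
  ∀ θ : Fin n → kˣ, h.hAct θ '' (I : Set L) = (I : Set L)

end IsQLaurentSeriesRing

/-- A two-sided ideal `P` of a (possibly noncommutative) ring `A` is prime if `P ≠ A`
and whenever `I, J` are two-sided ideals with `IJ ⊆ P`, then `I ⊆ P` or `J ⊆ P`. -/
def IsPrimeTwoSided {A : Type*} [Ring A] (P : TwoSidedIdeal A) : Prop :=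
  P ≠ ⊤ ∧ ∀ I J : TwoSidedIdeal A, (∀ a ∈ I, ∀ b ∈ J, a * b ∈ P) → I ≤ P ∨ J ≤ P

namespace StmtAux
open Finset

/-- total degree of an exponent -/
def deg {n : ℕ} (u : Fin n →₀ ℕ) : ℕ := ∑ i, u i

lemma deg_add {n : ℕ} (u v : Fin n →₀ ℕ) : deg (u + v) = deg u + deg v := by
  simp [deg, Finset.sum_add_distrib]

lemma apply_le_deg {n : ℕ} (u : Fin n →₀ ℕ) (i : Fin n) : u i ≤ deg u :=
  Finset.single_le_sum (fun _ _ => Nat.zero_le _) (Finset.mem_univ i)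

/-- degree-lexicographic strict order -/
def dlt {n : ℕ} (u v : Fin n →₀ ℕ) : Prop :=
  deg u < deg v ∨ (deg u = deg v ∧ toLex u < toLex v)

lemma dlt_irrefl {n : ℕ} (u : Fin n →₀ ℕ) : ¬ dlt u u := by
  simp [dlt]

lemma dlt_trans {n : ℕ} {u v w : Fin n →₀ ℕ} (h1 : dlt u v) (h2 : dlt v w) : dlt u w := by
  rcases h1 with h1 | ⟨h1, h1'⟩ <;> rcases h2 with h2 | ⟨h2, h2'⟩
  · exact Or.inl (h1.trans h2)
  · exact Or.inl (h2 ▸ h1)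
  · exact Or.inl (h1 ▸ h2)
  · exact Or.inr ⟨h1.trans h2, h1'.trans h2'⟩

lemma dlt_asymm {n : ℕ} {u v : Fin n →₀ ℕ} (h1 : dlt u v) : ¬ dlt v u :=
  fun h2 => dlt_irrefl u (dlt_trans h1 h2)

lemma dlt_trichotomy {n : ℕ} (u v : Fin n →₀ ℕ) : dlt u v ∨ u = v ∨ dlt v u := by
  rcases lt_trichotomy (deg u) (deg v) with h | h | h
  · exact Or.inl (Or.inl h)
  · rcases lt_trichotomy (toLex u) (toLex v) with h' | h' | h'
    · exact Or.inl (Or.inr ⟨h, h'⟩)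
    · exact Or.inr (Or.inl h')
    · exact Or.inr (Or.inr (Or.inr ⟨h.symm, h'⟩))
  · exact Or.inr (Or.inr (Or.inl h))

lemma eq_of_not_dlt {n : ℕ} {u v : Fin n →₀ ℕ} (h1 : ¬ dlt u v) (h2 : ¬ dlt v u) : u = v := by
  rcases dlt_trichotomy u v with h | h | h
  · exact absurd h h1
  · exact h
  · exact absurd h h2

lemma dlt_add_left {n : ℕ} (t : Fin n →₀ ℕ) {u v : Fin n →₀ ℕ} (h1 : dlt u v) :
    dlt (t + u) (t + v) := by
  rcases h1 with h1 | ⟨h1, h1'⟩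
  · exact Or.inl (by simp [deg_add]; omega)
  · refine Or.inr ⟨by simp [deg_add, h1], ?_⟩
    exact add_lt_add_right (α := Lex (Fin n →₀ ℕ)) h1' (toLex t)

lemma dlt_of_dlt_add_left {n : ℕ} {t u v : Fin n →₀ ℕ} (h1 : dlt (t + u) (t + v)) : dlt u v := by
  rcases h1 with h1 | ⟨h1, h1'⟩
  · exact Or.inl (by simp [deg_add] at h1; omega)
  · refine Or.inr ⟨by simp [deg_add] at h1; omega, ?_⟩
    exact lt_of_add_lt_add_left (a := (toLex t : Lex (Fin n →₀ ℕ))) h1'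

lemma deg_le_of_not_dlt {n : ℕ} {u v : Fin n →₀ ℕ} (h1 : ¬ dlt u v) : deg v ≤ deg u := by
  by_contra hc
  exact h1 (Or.inl (by omega))

lemma dlt_of_deg_lt {n : ℕ} {u v : Fin n →₀ ℕ} (h1 : deg u < deg v) : dlt u v := Or.inl h1

lemma finite_deg_le (n m : ℕ) : {u : Fin n →₀ ℕ | deg u ≤ m}.Finite := by
  apply Set.Finite.of_finite_image (f := fun (u : Fin n →₀ ℕ) (i : Fin n) => (⟨min (u i) m, by omega⟩ : Fin (m+1)))
  · exact Set.toFinite _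
  · intro u hu v hv huv
    ext i
    have h1 : u i ≤ m := (apply_le_deg u i).trans hu
    have h2 : v i ≤ m := (apply_le_deg v i).trans hv
    have := congrFun huv i
    simp only [Fin.mk.injEq] at this
    omega

lemma exists_dlt_min {n : ℕ} (S : Set (Fin n →₀ ℕ)) (hS : S.Nonempty) :
    ∃ u ∈ S, ∀ v ∈ S, ¬ dlt v u := by
  classical
  set d := sInf (deg '' S) with hd
  have hmem : d ∈ deg '' S := Nat.sInf_mem (hS.image deg)
  obtain ⟨u₀, hu₀S, hu₀⟩ := hmem
  have hFfin : (S ∩ {u | deg u ≤ d}).Finite := (finite_deg_le n d).subset (fun x hx => hx.2)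
  have hFne : (S ∩ {u | deg u ≤ d}).Nonempty := ⟨u₀, hu₀S, by simp [hu₀]⟩
  obtain ⟨u, huF, humin⟩ := Set.exists_min_image _ (fun u => (toLex u : Lex (Fin n →₀ ℕ)))
    hFfin hFne
  refine ⟨u, huF.1, fun v hv hdlt => ?_⟩
  have hud : deg u = d := le_antisymm huF.2 (Nat.sInf_le (s := deg '' S) ⟨u, huF.1, rfl⟩)
  rcases hdlt with h1 | ⟨h1, h1'⟩
  · exact absurd (Nat.sInf_le (s := deg '' S) ⟨v, hv, rfl⟩) (by omega)
  · have : v ∈ S ∩ {u | deg u ≤ d} := ⟨hv, by simp [h1, hud]⟩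
    exact absurd (humin v this) (not_le.mpr h1')


section Sig
variable {k : Type*} [Field k] {n : ℕ}

/-- `σ(u,v) = ∏_{i,j} q_{ij}^{u_i v_j}` with natural exponents. -/
def sigN (Q : QMatrix k n) (u v : Fin n →₀ ℕ) : k :=
  ∏ i, ∏ j, Q.q i j ^ (u i * v j)

lemma sigN_ne_zero (Q : QMatrix k n) (u v : Fin n →₀ ℕ) : sigN Q u v ≠ 0 :=
  Finset.prod_ne_zero_iff.mpr fun i _ => Finset.prod_ne_zero_iff.mpr fun j _ =>
    pow_ne_zero _ (Q.q_ne_zero i j)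

lemma weight_ne_zero (Q : QMatrix k n) (u v : Fin n →₀ ℕ) : Q.weight u v ≠ 0 := by
  refine Finset.prod_ne_zero_iff.mpr fun i _ => Finset.prod_ne_zero_iff.mpr fun j _ => ?_
  split
  · exact pow_ne_zero _ (Q.q_ne_zero i j)
  · exact one_ne_zero

private lemma hprod_aux (F : Fin n → Fin n → k) :
    (∏ i, ∏ j, F i j) = ∏ p ∈ Finset.univ ×ˢ Finset.univ, F p.1 p.2 :=
  (Finset.prod_product Finset.univ Finset.univ (fun p : Fin n × Fin n => F p.1 p.2)).symm

lemma weight_eq_sigN_mul (Q : QMatrix k n) (u v : Fin n →₀ ℕ) :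
    Q.weight u v = sigN Q u v * Q.weight v u := by
  classical
  set P := (Finset.univ ×ˢ Finset.univ : Finset (Fin n × Fin n)) with hP
  have e1 : sigN Q u v =
      (∏ p ∈ P, if p.2 < p.1 then Q.q p.1 p.2 ^ (u p.1 * v p.2) else 1) *
      ∏ p ∈ P, if ¬ p.2 < p.1 then Q.q p.1 p.2 ^ (u p.1 * v p.2) else 1 := by
    rw [← Finset.prod_mul_distrib, sigN, hprod_aux]
    refine Finset.prod_congr rfl fun p _ => ?_
    by_cases hc : p.2 < p.1 <;> simp [hc]
  have e2 : (∏ p ∈ P, if ¬ p.2 < p.1 then Q.q p.1 p.2 ^ (u p.1 * v p.2) else 1)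
      = ∏ p ∈ P, if ¬ p.1 < p.2 then Q.q p.2 p.1 ^ (u p.2 * v p.1) else 1 := by
    refine Finset.prod_nbij' (fun p => (p.2, p.1)) (fun p => (p.2, p.1)) ?_ ?_ ?_ ?_ ?_ <;>
      simp [hP]
  have e3 : (∏ p ∈ P, if ¬ p.1 < p.2 then Q.q p.2 p.1 ^ (u p.2 * v p.1) else 1) *
      Q.weight v u = 1 := by
    rw [QMatrix.weight, hprod_aux, ← Finset.prod_mul_distrib]
    refine Finset.prod_eq_one fun p _ => ?_
    rcases lt_trichotomy p.1 p.2 with hc | hc | hc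
    · simp [hc, not_lt_of_gt hc, asymm hc]
    · simp [hc, lt_irrefl, Q.diag]
    · have h1 : ¬ p.1 < p.2 := asymm hc
      simp only [h1, hc, if_true, if_pos, not_false_iff]
      rw [show v p.1 * u p.2 = u p.2 * v p.1 by ring, ← mul_pow, Q.antisym p.2 p.1, one_pow]
  have e4 : Q.weight u v =
      ∏ p ∈ P, if p.2 < p.1 then Q.q p.1 p.2 ^ (u p.1 * v p.2) else 1 := by
    rw [QMatrix.weight, hprod_aux]
  rw [e1, e4, mul_assoc, e2, e3, mul_one]

lemma sigN_mul_symm (Q : QMatrix k n) (u v : Fin n →₀ ℕ) : sigN Q u v * sigN Q v u = 1 := by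
  classical
  set P := (Finset.univ ×ˢ Finset.univ : Finset (Fin n × Fin n)) with hP
  have e2 : (∏ p ∈ P, Q.q p.1 p.2 ^ (v p.1 * u p.2))
      = ∏ p ∈ P, Q.q p.2 p.1 ^ (v p.2 * u p.1) := by
    refine Finset.prod_nbij' (fun p => (p.2, p.1)) (fun p => (p.2, p.1)) ?_ ?_ ?_ ?_ ?_ <;>
      simp [hP]
  rw [sigN, sigN, hprod_aux, hprod_aux, e2, ← Finset.prod_mul_distrib]
  refine Finset.prod_eq_one fun p _ => ?_
  rw [show v p.2 * u p.1 = u p.1 * v p.2 by ring, ← mul_pow, Q.antisym p.1 p.2, one_pow]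

lemma sigN_add_left (Q : QMatrix k n) (u u' v : Fin n →₀ ℕ) :
    sigN Q (u + u') v = sigN Q u v * sigN Q u' v := by
  rw [sigN, sigN, sigN, ← Finset.prod_mul_distrib]
  refine Finset.prod_congr rfl fun i _ => ?_
  rw [← Finset.prod_mul_distrib]
  refine Finset.prod_congr rfl fun j _ => ?_
  rw [← pow_add, Finsupp.add_apply, add_mul]

lemma sigN_zero_left (Q : QMatrix k n) (v : Fin n →₀ ℕ) : sigN Q 0 v = 1 := by
  simp [sigN]

lemma sigN_zero_right (Q : QMatrix k n) (v : Fin n →₀ ℕ) : sigN Q v 0 = 1 := by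
  simp [sigN]

lemma sigN_single_left (Q : QMatrix k n) (i0 : Fin n) (v : Fin n →₀ ℕ) :
    sigN Q (Finsupp.single i0 1) v = ∏ j, Q.q i0 j ^ v j := by
  rw [sigN]
  rw [Finset.prod_eq_single_of_mem i0 (Finset.mem_univ _)]
  · refine Finset.prod_congr rfl fun j _ => ?_
    rw [Finsupp.single_eq_same, one_mul]
  · intro b _ hb
    refine Finset.prod_eq_one fun j _ => ?_
    rw [Finsupp.single_eq_of_ne' (Ne.symm hb), zero_mul, pow_zero]

lemma sigN_expand_left (Q : QMatrix k n) (u v : Fin n →₀ ℕ) :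
    sigN Q u v = ∏ i, (sigN Q (Finsupp.single i 1) v) ^ u i := by
  rw [sigN]
  refine Finset.prod_congr rfl fun i _ => ?_
  rw [sigN_single_left, ← Finset.prod_pow]
  refine Finset.prod_congr rfl fun j _ => ?_
  rw [← pow_mul, Nat.mul_comm]

lemma sigN_single_right (Q : QMatrix k n) (u : Fin n →₀ ℕ) (j0 : Fin n) :
    sigN Q u (Finsupp.single j0 1) = ∏ i, Q.q i j0 ^ u i := by
  rw [sigN]
  refine Finset.prod_congr rfl fun i _ => ?_
  rw [Finset.prod_eq_single_of_mem j0 (Finset.mem_univ _)]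
  · rw [Finsupp.single_eq_same, mul_one]
  · intro b _ hb
    rw [Finsupp.single_eq_of_ne' (Ne.symm hb), mul_zero, pow_zero]

lemma sigN_expand_right (Q : QMatrix k n) (u v : Fin n →₀ ℕ) :
    sigN Q u v = ∏ j, (sigN Q u (Finsupp.single j 1)) ^ v j := by
  rw [sigN, Finset.prod_comm]
  refine Finset.prod_congr rfl fun j _ => ?_
  rw [sigN_single_right, ← Finset.prod_pow]
  refine Finset.prod_congr rfl fun i _ => ?_
  rw [← pow_mul]

end Sig
section Coeff
variable {k : Type*} [Field k] {n : ℕ} {Q : QMatrix k n}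
variable {R : Type*} [Ring R] [Algebra k R] (h : IsQPowerSeriesRing Q R)

lemma ext_coeff {f g : R} (H : ∀ u, h.coeff f u = h.coeff g u) : f = g :=
  h.coeff.injective (funext H)

lemma coeff_symm_apply (c : (Fin n →₀ ℕ) → k) (u : Fin n →₀ ℕ) :
    h.coeff (h.coeff.symm c) u = c u := by
  rw [h.coeff.apply_symm_apply]

lemma coeff_mono (s t : Fin n →₀ ℕ) :
    h.coeff (h.mono s) t = if t = s then 1 else 0 := by
  rw [IsQPowerSeriesRing.mono, coeff_symm_apply]

lemma mono_zero : h.mono 0 = (1 : R) :=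
  ext_coeff h fun u => by rw [coeff_mono, h.coeff_one]

lemma coeff_smul (c : k) (f : R) (u : Fin n →₀ ℕ) :
    h.coeff (c • f) u = c * h.coeff f u := by
  rw [map_smul]; rfl

lemma coeff_add (f g : R) (u : Fin n →₀ ℕ) :
    h.coeff (f + g) u = h.coeff f u + h.coeff g u := by
  rw [map_add]; rfl

lemma coeff_sub (f g : R) (u : Fin n →₀ ℕ) :
    h.coeff (f - g) u = h.coeff f u - h.coeff g u := by
  rw [map_sub]; rfl

lemma coeff_zero (u : Fin n →₀ ℕ) : h.coeff (0 : R) u = 0 := by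
  rw [map_zero]; rfl

lemma coeff_finsum (s : Finset ι) (F : ι → R) (u : Fin n →₀ ℕ) :
    h.coeff (∑ i ∈ s, F i) u = ∑ i ∈ s, h.coeff (F i) u := by
  classical
  induction s using Finset.induction with
  | empty => simp [coeff_zero]
  | insert _ _ hni ih => rename_i a s'
                         rw [Finset.sum_insert hni, Finset.sum_insert hni, coeff_add, ih]

lemma coeff_mono_mul (t : Fin n →₀ ℕ) (f : R) (s : Fin n →₀ ℕ) :
    h.coeff (h.mono t * f) s =
      if t ≤ s then Q.weight t (s - t) * h.coeff f (s - t) else 0 := by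
  classical
  rw [h.coeff_mul]
  by_cases hts : t ≤ s
  · rw [if_pos hts]
    rw [Finset.sum_eq_single (t, s - t)]
    · rw [coeff_mono, if_pos rfl, one_mul]; ring
    · rintro ⟨a, b⟩ hab hne
      rw [Finset.HasAntidiagonal.mem_antidiagonal] at hab
      have ha : a ≠ t := by
        rintro rfl
        exact hne (by rw [show b = s - a from by
          have := add_tsub_cancel_of_le hts
          exact add_left_cancel (hab.trans this.symm)])
      rw [coeff_mono, if_neg ha, zero_mul, zero_mul]
    · intro hmem
      exact absurd (Finset.HasAntidiagonal.mem_antidiagonal.mpr (add_tsub_cancel_of_le hts)) hmem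
  · rw [if_neg hts]
    refine Finset.sum_eq_zero ?_
    rintro ⟨a, b⟩ hab
    rw [Finset.HasAntidiagonal.mem_antidiagonal] at hab
    have ha : a ≠ t := by
      rintro rfl
      exact hts (hab ▸ le_add_right le_rfl)
    rw [coeff_mono, if_neg ha, zero_mul, zero_mul]

lemma coeff_mul_mono (f : R) (t : Fin n →₀ ℕ) (s : Fin n →₀ ℕ) :
    h.coeff (f * h.mono t) s =
      if t ≤ s then h.coeff f (s - t) * Q.weight (s - t) t else 0 := by
  classical
  rw [h.coeff_mul]
  by_cases hts : t ≤ s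
  · rw [if_pos hts]
    rw [Finset.sum_eq_single (s - t, t)]
    · rw [coeff_mono, if_pos rfl, mul_one]
    · rintro ⟨a, b⟩ hab hne
      rw [Finset.HasAntidiagonal.mem_antidiagonal] at hab
      have hb : b ≠ t := by
        rintro rfl
        refine hne ?_
        have h2 : a + b = (s - b) + b := by
          rw [tsub_add_cancel_of_le hts]; exact hab
        rw [show a = s - b from add_right_cancel h2]
      rw [coeff_mono, if_neg hb, mul_zero, zero_mul]
    · intro hmem
      exact absurd (Finset.HasAntidiagonal.mem_antidiagonal.mpr (tsub_add_cancel_of_le hts)) hmem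
  · rw [if_neg hts]
    refine Finset.sum_eq_zero ?_
    rintro ⟨a, b⟩ hab
    rw [Finset.HasAntidiagonal.mem_antidiagonal] at hab
    have hb : b ≠ t := by
      rintro rfl
      exact hts (hab ▸ le_add_left le_rfl)
    rw [coeff_mono, if_neg hb, mul_zero, zero_mul]

lemma mono_mul_mono (u v : Fin n →₀ ℕ) :
    h.mono u * h.mono v = Q.weight u v • h.mono (u + v) := by
  refine ext_coeff h fun t => ?_
  rw [coeff_mono_mul, coeff_smul, coeff_mono]
  by_cases htu : u ≤ t
  · rw [if_pos htu, coeff_mono]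
    by_cases ht : t = u + v
    · have : t - u = v := by rw [ht, add_tsub_cancel_left]
      rw [if_pos this, if_pos ht, mul_one, mul_one, this]
    · have : t - u ≠ v := by
        intro hc
        exact ht (by rw [← hc, add_tsub_cancel_of_le htu])
      rw [if_neg this, if_neg ht, mul_zero, mul_zero]
  · have hne : t ≠ u + v := by
      rintro rfl
      exact htu (le_add_right le_rfl)
    rw [if_neg htu, coeff_mono, if_neg hne, mul_zero]

/-- scale the coefficients of `f` by the function `φ`. -/
def scale (φ : (Fin n →₀ ℕ) → k) (f : R) : R :=
  h.coeff.symm fun u => φ u * h.coeff f u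

lemma coeff_scale (φ : (Fin n →₀ ℕ) → k) (f : R) (u : Fin n →₀ ℕ) :
    h.coeff (scale h φ f) u = φ u * h.coeff f u := by
  rw [scale, coeff_symm_apply]

lemma scale_scale (φ ψ : (Fin n →₀ ℕ) → k) (f : R) :
    scale h φ (scale h ψ f) = scale h (fun u => φ u * ψ u) f :=
  ext_coeff h fun u => by rw [coeff_scale, coeff_scale, coeff_scale, mul_assoc]

lemma scale_one (f : R) : scale h (fun _ => (1:k)) f = f :=
  ext_coeff h fun u => by rw [coeff_scale, one_mul]

/-- conjugation by the monomial `x^s` -/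
def gam (s : Fin n →₀ ℕ) (f : R) : R := scale h (fun u => sigN Q s u) f

def gamInv (s : Fin n →₀ ℕ) (f : R) : R := scale h (fun u => (sigN Q s u)⁻¹) f

lemma gam_gamInv (s : Fin n →₀ ℕ) (f : R) : gam h s (gamInv h s f) = f := by
  rw [gam, gamInv, scale_scale]
  refine ext_coeff h fun u => ?_
  rw [coeff_scale, mul_inv_cancel₀ (sigN_ne_zero Q s u), one_mul]

lemma mono_mul (s : Fin n →₀ ℕ) (f : R) :
    h.mono s * f = gam h s f * h.mono s := by
  refine ext_coeff h fun t => ?_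
  rw [coeff_mono_mul, coeff_mul_mono]
  by_cases hts : s ≤ t
  · rw [if_pos hts, if_pos hts, gam, coeff_scale,
      weight_eq_sigN_mul Q s (t - s)]
    ring
  · rw [if_neg hts, if_neg hts]

lemma mul_mono (f : R) (s : Fin n →₀ ℕ) :
    f * h.mono s = h.mono s * gamInv h s f := by
  rw [mono_mul h s (gamInv h s f), gam_gamInv]

lemma exists_X_mul (i : Fin n) (g : R)
    (hg : ∀ u, h.coeff g u ≠ 0 → u i ≠ 0) : ∃ f, g = h.X i * f := by
  classical
  refine ⟨h.coeff.symm fun u =>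
    (Q.weight (Finsupp.single i 1) u)⁻¹ * h.coeff g (u + Finsupp.single i 1), ?_⟩
  refine ext_coeff h fun s => ?_
  rw [IsQPowerSeriesRing.X, coeff_mono_mul]
  by_cases hs : Finsupp.single i 1 ≤ s
  · rw [if_pos hs, coeff_symm_apply, ← mul_assoc, mul_inv_cancel₀ (weight_ne_zero Q _ _),
      one_mul, tsub_add_cancel_of_le hs]
  · rw [if_neg hs]
    by_contra hc
    have hsi := hg s hc
    exact hs (Finsupp.single_le_iff.mpr (by omega))

end Coeff
section Prime
variable {k : Type*} [Field k] {n : ℕ} {Q : QMatrix k n}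
variable {R : Type*} [Ring R] [Algebra k R] (h : IsQPowerSeriesRing Q R)

lemma ksmul_mem (I : TwoSidedIdeal R) (c : k) {x : R} (hx : x ∈ I) : c • x ∈ I := by
  rw [Algebra.smul_def]; exact I.mul_mem_left _ _ hx

lemma one_not_mem {P : TwoSidedIdeal R} (hP : IsPrimeTwoSided P) : (1 : R) ∉ P :=
  fun h1 => hP.1 (P.one_mem_iff.mp h1)

/-- the two-sided ideal generated by a single element, described explicitly -/
private def spanI (a : R) : TwoSidedIdeal R :=
  TwoSidedIdeal.mk' (AddSubgroup.closure {x : R | ∃ r r' : R, x = r * a * r'} : Set R)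
    (zero_mem _)
    (fun hx hy => add_mem hx hy)
    (fun hx => neg_mem hx)
    (by
      intro x y hy
      refine AddSubgroup.closure_induction
        (fun z hz => ?_) ?_ (fun z w _ _ hz hw => ?_) (fun z _ hz => ?_) hy
      · obtain ⟨r, r', rfl⟩ := hz
        exact AddSubgroup.subset_closure ⟨x * r, r', by noncomm_ring⟩
      · rw [mul_zero]; exact zero_mem _
      · rw [mul_add]; exact add_mem hz hw
      · rw [mul_neg]; exact neg_mem hz)
    (by
      intro x y hx
      refine AddSubgroup.closure_induction
        (fun z hz => ?_) ?_ (fun z w _ _ hz hw => ?_) (fun z _ hz => ?_) hx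
      · obtain ⟨r, r', rfl⟩ := hz
        exact AddSubgroup.subset_closure ⟨r, r' * y, by noncomm_ring⟩
      · rw [zero_mul]; exact zero_mem _
      · rw [add_mul]; exact add_mem hz hw
      · rw [neg_mul]; exact neg_mem hz)

private lemma mem_spanI (a : R) : a ∈ spanI a := by
  rw [spanI, TwoSidedIdeal.mem_mk']
  exact AddSubgroup.subset_closure ⟨1, 1, by noncomm_ring⟩

lemma prime_middle {P : TwoSidedIdeal R} (hP : IsPrimeTwoSided P) (a b : R)
    (H : ∀ u : R, a * u * b ∈ P) : a ∈ P ∨ b ∈ P := by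
  have key : ∀ x ∈ spanI a, ∀ y ∈ spanI b, x * y ∈ P := by
    intro x hx
    rw [spanI, TwoSidedIdeal.mem_mk'] at hx
    refine AddSubgroup.closure_induction (fun z hz => ?_) ?_
      (fun z w _ _ hz hw => ?_) (fun z _ hz => ?_) hx
    · obtain ⟨r, r', rfl⟩ := hz
      intro y hy
      rw [spanI, TwoSidedIdeal.mem_mk'] at hy
      refine AddSubgroup.closure_induction (fun z' hz' => ?_) ?_
        (fun z' w' _ _ hz' hw' => ?_) (fun z' _ hz' => ?_) hy
      · obtain ⟨t, t', rfl⟩ := hz'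
        rw [show r * a * r' * (t * b * t') = r * ((a * (r' * t) * b) * t') by noncomm_ring]
        exact P.mul_mem_left _ _ (P.mul_mem_right _ _ (H (r' * t)))
      · rw [mul_zero]; exact P.zero_mem
      · rw [mul_add]; exact P.add_mem hz' hw'
      · rw [mul_neg]; exact P.neg_mem hz'
    · intro y _; rw [zero_mul]; exact P.zero_mem
    · intro y hy; rw [add_mul]; exact P.add_mem (hz y hy) (hw y hy)
    · intro y hy; rw [neg_mul]; exact P.neg_mem (hz y hy)
  rcases hP.2 _ _ key with h1 | h1
  · exact Or.inl (h1 (mem_spanI a))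
  · exact Or.inr (h1 (mem_spanI b))

lemma gam_mem {P : TwoSidedIdeal R} (hP : IsPrimeTwoSided P) (s : Fin n →₀ ℕ)
    (hs : h.mono s ∉ P) {r : R} (hr : r ∈ P) : gam h s r ∈ P := by
  have H : ∀ u : R, gam h s r * u * h.mono s ∈ P := by
    intro u
    rw [mul_assoc, mul_mono h u s, ← mul_assoc, ← mono_mul h s r, mul_assoc]
    exact P.mul_mem_left _ _ (P.mul_mem_right _ _ hr)
  rcases prime_middle hP _ _ H with h1 | h1
  · exact h1
  · exact absurd h1 hs

lemma deg_single (i : Fin n) : deg (Finsupp.single i (1:ℕ)) = 1 := by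
  simp [deg, Finsupp.single_apply]

lemma X_mem_of_mono_mem {P : TwoSidedIdeal R} (hP : IsPrimeTwoSided P) {s : Fin n →₀ ℕ}
    (hmem : h.mono s ∈ P) : ∃ i, s i ≠ 0 ∧ h.X i ∈ P := by
  classical
  generalize hds : deg s = d
  induction d using Nat.strong_induction_on generalizing s with
  | _ d ih =>
  by_cases hs0 : s = 0
  · subst hs0
    rw [mono_zero] at hmem
    exact absurd hmem (one_not_mem hP)
  · obtain ⟨i, hi⟩ : ∃ i, s i ≠ 0 := by
      by_contra hc
      push_neg at hc
      exact hs0 (Finsupp.ext fun j => hc j)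
    have hle : Finsupp.single i 1 ≤ s := Finsupp.single_le_iff.mpr (by omega)
    set s' := s - Finsupp.single i 1 with hs'
    have hsum : Finsupp.single i 1 + s' = s := add_tsub_cancel_of_le hle
    have hsplit : h.mono (Finsupp.single i 1) * h.mono s'
        = Q.weight (Finsupp.single i 1) s' • h.mono s := by
      rw [mono_mul_mono, hsum]
    have H : ∀ u : R, h.mono (Finsupp.single i 1) * u * h.mono s' ∈ P := by
      intro u
      rw [mul_assoc, mul_mono h u s', ← mul_assoc, hsplit, smul_mul_assoc]
      exact ksmul_mem _ _ (P.mul_mem_right _ _ hmem)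
    rcases prime_middle hP _ _ H with h1 | h1
    · exact ⟨i, hi, h1⟩
    · have hdeg : deg s' < d := by
        have := deg_add (Finsupp.single i 1) s'
        rw [hsum, hds, deg_single] at this
        omega
      obtain ⟨j, hj, hXj⟩ := ih (deg s') hdeg h1 rfl
      refine ⟨j, ?_, hXj⟩
      have : s' j ≤ s j := by
        rw [hs', Finsupp.tsub_apply]
        omega
      omega

end Prime
section Closed
variable {k : Type*} [Field k] {n : ℕ} {Q : QMatrix k n}
variable {R : Type*} [Ring R] [Algebra k R] (h : IsQPowerSeriesRing Q R)

/-- `u` is the lowest exponent (in deg-lex order) in the support of `f` -/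
def IsLt (f : R) (u : Fin n →₀ ℕ) : Prop :=
  h.coeff f u ≠ 0 ∧ ∀ v, dlt v u → h.coeff f v = 0

lemma deg_le_of_dlt {u v : Fin n →₀ ℕ} (h1 : dlt u v) : deg u ≤ deg v := by
  rcases h1 with h1 | ⟨h1, _⟩ <;> omega

lemma exists_isLt {f : R} (hf : f ≠ 0) : ∃ u, IsLt h f u := by
  have hne : {u | h.coeff f u ≠ 0}.Nonempty := by
    by_contra hc
    rw [Set.not_nonempty_iff_eq_empty] at hc
    refine hf (ext_coeff h fun u => ?_)
    rw [coeff_zero]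
    by_contra hu
    have : u ∈ {u | h.coeff f u ≠ 0} := hu
    rw [hc] at this
    exact this
  obtain ⟨u, hu, hmin⟩ := exists_dlt_min _ hne
  refine ⟨u, hu, fun v hv => ?_⟩
  by_contra hvne
  exact hmin v hvne hv

lemma isLt_unique {f : R} {u v : Fin n →₀ ℕ} (h1 : IsLt h f u) (h2 : IsLt h f v) : u = v :=
  eq_of_not_dlt (fun hd => h1.1 (h2.2 u hd)) (fun hd => h2.1 (h1.2 v hd))

lemma dickson (U : Set (Fin n →₀ ℕ)) :
    ∃ B : Finset (Fin n →₀ ℕ), ↑B ⊆ U ∧ ∀ u ∈ U, ∃ b ∈ B, b ≤ u := by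
  classical
  by_contra hc
  push_neg at hc
  choose! bad hbadU hbad using hc
  set Aseq : ℕ → Finset (Fin n →₀ ℕ) :=
    fun m => Nat.rec (∅ : Finset (Fin n →₀ ℕ)) (fun _ Am => insert (bad Am) Am) m with hAseq
  have hA0 : ∀ m, ↑(Aseq m) ⊆ U := by
    intro m
    induction m with
    | zero => simp [hAseq]
    | succ m ih =>
      intro x hx
      rcases Finset.mem_insert.mp hx with h1 | h1
      · exact h1 ▸ hbadU (Aseq m) ih
      · exact ih h1
  have hmono : ∀ m m', m ≤ m' → Aseq m ⊆ Aseq m' := by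
    intro m m' hmm
    induction m' with
    | zero => rw [Nat.le_zero.mp hmm]
    | succ m' ih =>
      rcases Nat.lt_or_ge m (m'+1) with h1 | h1
      · exact (ih (by omega)).trans (Finset.subset_insert _ _)
      · rw [Nat.le_antisymm hmm h1]
  have hnotle : ∀ a b, a < b → ¬ bad (Aseq a) ≤ bad (Aseq b) := by
    intro a b hab hle
    have hmem : bad (Aseq a) ∈ Aseq b :=
      hmono (a+1) b hab (Finset.mem_insert_self _ _)
    exact hbad (Aseq b) (hA0 b) (bad (Aseq a)) hmem hle
  obtain ⟨i, j, hij, hle⟩ := Set.isPWO_of_wellQuasiOrderedLE U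
    (fun m => ⟨bad (Aseq m), hbadU (Aseq m) (hA0 m)⟩)
  exact hnotle i j hij hle

/-- `f` is approximable to every degree by elements of `I` -/
def Approx (I : TwoSidedIdeal R) (f : R) : Prop :=
  ∀ m : ℕ, ∃ g ∈ I, ∀ u, deg u ≤ m → h.coeff f u = h.coeff g u

lemma approx_of_sub_mem {I : TwoSidedIdeal R} {f g : R} (hf : Approx h I f)
    (hfg : f - g ∈ I) : Approx h I g := by
  intro m
  obtain ⟨gg, hgg, hagree⟩ := hf m
  refine ⟨gg - (f - g), I.sub_mem hgg hfg, fun u hu => ?_⟩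
  rw [coeff_sub, coeff_sub, ← hagree u hu]
  ring

lemma approx_zero (I : TwoSidedIdeal R) : Approx h I (0 : R) :=
  fun _ => ⟨0, I.zero_mem, fun _ _ => rfl⟩

lemma mem_of_approx (I : TwoSidedIdeal R) (f : R) (happrox : Approx h I f) : f ∈ I := by
  classical
  by_cases hf0 : f = 0
  · exact hf0 ▸ I.zero_mem
  obtain ⟨B, hBU, hBbasis⟩ := dickson {u | ∃ g ∈ I, IsLt h g u}
  have hpick : ∀ b ∈ B, ∃ g, g ∈ I ∧ IsLt h g b ∧ h.coeff g b = 1 := by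
    intro b hb
    obtain ⟨g, hgI, hgLt⟩ := hBU hb
    refine ⟨(h.coeff g b)⁻¹ • g, ksmul_mem I _ hgI, ⟨?_, fun v hv => ?_⟩, ?_⟩
    · rw [coeff_smul]
      exact mul_ne_zero (inv_ne_zero hgLt.1) hgLt.1
    · rw [coeff_smul, hgLt.2 v hv, mul_zero]
    · rw [coeff_smul, inv_mul_cancel₀ hgLt.1]
  choose! gfun hgfunI hgfunLt hgfunC using hpick
  have step : ∀ g : R, g ≠ 0 → Approx h I g →
      ∃ d : (Fin n →₀ ℕ) × (Fin n →₀ ℕ) × k,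
        d.1 ∈ B ∧ IsLt h g (d.2.1 + d.1) ∧
        ∀ u, ¬ dlt (d.2.1 + d.1) u →
          h.coeff (g - d.2.2 • (h.mono d.2.1 * gfun d.1)) u = 0 := by
    intro g h0 ha
    obtain ⟨u₀, hu₀⟩ := exists_isLt h h0
    obtain ⟨g', hg'I, hagree⟩ := ha (deg u₀)
    have hgLt0 : IsLt h g' u₀ :=
      ⟨by rw [← hagree u₀ le_rfl]; exact hu₀.1,
       fun v hv => by rw [← hagree v (deg_le_of_dlt hv)]; exact hu₀.2 v hv⟩
    obtain ⟨b, hbB, hble⟩ := hBbasis u₀ ⟨g', hg'I, hgLt0⟩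
    set t := u₀ - b with ht
    have htb : t + b = u₀ := tsub_add_cancel_of_le hble
    refine ⟨(b, t, h.coeff g u₀ * (Q.weight t b)⁻¹), hbB, htb ▸ hu₀, fun u hu => ?_⟩
    simp only
    rw [coeff_sub, coeff_smul, coeff_mono_mul]
    rcases dlt_trichotomy u (t + b) with hlt | heq | hgt
    · rw [hu₀.2 u (htb ▸ hlt)]
      by_cases htu : t ≤ u
      · rw [if_pos htu]
        have hud : dlt (u - t) b := by
          refine dlt_of_dlt_add_left (t := t) ?_
          rwa [add_tsub_cancel_of_le htu]
        rw [(hgfunLt b hbB).2 _ hud, mul_zero, mul_zero, sub_zero]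
      · rw [if_neg htu, mul_zero, sub_zero]
    · have htu : t ≤ t + b := le_add_right le_rfl
      rw [heq, if_pos htu, add_tsub_cancel_left, hgfunC b hbB, mul_one, htb,
        mul_assoc, inv_mul_cancel₀ (weight_ne_zero Q t b), mul_one, sub_self]
    · exact absurd hgt hu
  set datf : R → (Fin n →₀ ℕ) × (Fin n →₀ ℕ) × k := fun g =>
    if hg : g ≠ 0 ∧ Approx h I g then Classical.choose (step g hg.1 hg.2)
    else (0, 0, 0) with hdatf
  set nxt : R → R := fun g =>
    g - (datf g).2.2 • (h.mono (datf g).2.1 * gfun (datf g).1) with hnxt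
  set Fs : ℕ → R := fun m => nxt^[m] f with hFs
  have hFs0 : Fs 0 = f := rfl
  have hFsS : ∀ m, Fs (m+1) = nxt (Fs m) := fun m => Function.iterate_succ_apply' _ _ _
  have hdat : ∀ g : R, g ≠ 0 → Approx h I g →
      (datf g).1 ∈ B ∧ IsLt h g ((datf g).2.1 + (datf g).1) ∧
      ∀ u, ¬ dlt ((datf g).2.1 + (datf g).1) u → h.coeff (nxt g) u = 0 := by
    intro g h0 ha
    have hcond : g ≠ 0 ∧ Approx h I g := ⟨h0, ha⟩
    simp only [hdatf, dif_pos hcond, hnxt]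
    exact Classical.choose_spec (step g hcond.1 hcond.2)
  have hdatf0 : datf 0 = (0, 0, 0) := by
    rw [hdatf]
    exact dif_neg (by simp)
  have hdead : ∀ m, Fs m = 0 → Fs (m+1) = 0 := by
    intro m hm
    rw [hFsS m, hnxt]
    simp only
    rw [hm, hdatf0]
    simp
  have hdead' : ∀ m m', m ≤ m' → Fs m = 0 → Fs m' = 0 := by
    intro m m' hmm hm
    induction m' with
    | zero => rwa [Nat.le_zero.mp hmm] at hm
    | succ m' ih =>
      rcases Nat.lt_or_ge m (m'+1) with h1 | h1
      · exact hdead m' (ih (by omega))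
      · rwa [Nat.le_antisymm hmm h1] at hm
  have hsub : ∀ m, f - Fs m ∈ I ∧ Approx h I (Fs m) := by
    intro m
    induction m with
    | zero =>
      rw [hFs0]
      exact ⟨by rw [sub_self]; exact I.zero_mem, happrox⟩
    | succ m ih =>
      by_cases hm0 : Fs m = 0
      · rw [hdead m hm0]
        exact ⟨by rw [sub_zero]; simpa [hm0, sub_zero] using ih.1, approx_zero h I⟩
      · have hd := hdat (Fs m) hm0 ih.2
        have hmemI : (datf (Fs m)).2.2 • (h.mono (datf (Fs m)).2.1 * gfun (datf (Fs m)).1) ∈ I :=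
          ksmul_mem I _ (I.mul_mem_left _ _ (hgfunI _ hd.1))
        have h1 : f - Fs (m+1) ∈ I := by
          rw [hFsS, hnxt]
          simp only
          rw [show f - (Fs m - (datf (Fs m)).2.2 • (h.mono (datf (Fs m)).2.1 * gfun (datf (Fs m)).1))
            = (f - Fs m) + (datf (Fs m)).2.2 • (h.mono (datf (Fs m)).2.1 * gfun (datf (Fs m)).1)
            by abel]
          exact I.add_mem ih.1 hmemI
        exact ⟨h1, approx_of_sub_mem h happrox h1⟩
  set mu : ℕ → (Fin n →₀ ℕ) := fun m => (datf (Fs m)).2.1 + (datf (Fs m)).1 with hmu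
  have hlive : ∀ m, Fs (m+1) ≠ 0 → Fs m ≠ 0 := fun m h1 h2 => h1 (hdead m h2)
  have hstrict : ∀ m, Fs (m+1) ≠ 0 → dlt (mu m) (mu (m+1)) := by
    intro m h1
    have h0 := hlive m h1
    have hd := hdat (Fs m) h0 (hsub m).2
    have hd' := hdat (Fs (m+1)) h1 (hsub (m+1)).2
    by_contra hc
    have := hd.2.2 (mu (m+1)) hc
    rw [← hFsS] at this
    exact hd'.2.1.1 this
  have hmono2 : ∀ m m', m < m' → Fs m' ≠ 0 → dlt (mu m) (mu m') := by
    intro m m' hmm h1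
    induction m' with
    | zero => omega
    | succ m' ih =>
      rcases Nat.lt_or_ge m m' with h2 | h2
      · exact dlt_trans (ih h2 (hlive m' h1)) (hstrict m' h1)
      · have heq : m = m' := by omega
        subst heq
        exact hstrict m h1
  have hbig : ∀ u : Fin n →₀ ℕ, ∃ M : ℕ, ∀ m, M ≤ m → Fs m ≠ 0 → dlt u (mu m) := by
    intro u
    by_cases hex : ∃ m₀, Fs m₀ = 0
    · obtain ⟨m₀, hm₀⟩ := hex
      exact ⟨m₀, fun m hm hlive' => absurd (hdead' m₀ m hm hm₀) hlive'⟩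
    · push_neg at hex
      have hinj : Function.Injective mu := by
        intro a b hab
        by_contra hne
        rcases Nat.lt_or_ge a b with h1 | h1
        · exact dlt_irrefl (mu b) (hab ▸ hmono2 a b h1 (hex b))
        · exact dlt_irrefl (mu a) (hab ▸ hmono2 b a (by omega) (hex a))
      have hfin : {m : ℕ | deg (mu m) ≤ deg u}.Finite := by
        have heq : {m : ℕ | deg (mu m) ≤ deg u} = mu ⁻¹' {v | deg v ≤ deg u} := rfl
        rw [heq]
        exact Set.Finite.preimage hinj.injOn (finite_deg_le n (deg u))
      obtain ⟨M, hM⟩ := hfin.bddAbove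
      refine ⟨M + 1, fun m hm _ => dlt_of_deg_lt ?_⟩
      by_contra hc
      have hmS : m ∈ {m : ℕ | deg (mu m) ≤ deg u} := by
        simp only [Set.mem_setOf_eq]; omega
      exact absurd (hM hmS) (by omega)
  set rc : (Fin n →₀ ℕ) → (Fin n →₀ ℕ) → k := fun b a =>
    if hm : ∃ m, Fs m ≠ 0 ∧ (datf (Fs m)).1 = b ∧ (datf (Fs m)).2.1 = a
    then (datf (Fs hm.choose)).2.2 else 0 with hrc
  set rcM : ℕ → (Fin n →₀ ℕ) → (Fin n →₀ ℕ) → k := fun M b a =>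
    ∑ m ∈ Finset.range M,
      if Fs m ≠ 0 ∧ (datf (Fs m)).1 = b ∧ (datf (Fs m)).2.1 = a
      then (datf (Fs m)).2.2 else 0 with hrcM
  have huniq : ∀ m m', Fs m ≠ 0 → Fs m' ≠ 0 → (datf (Fs m)).1 = (datf (Fs m')).1 →
      (datf (Fs m)).2.1 = (datf (Fs m')).2.1 → m = m' := by
    intro m m' h1 h2 e1 e2
    by_contra hne
    have hmueq : mu m = mu m' := by rw [hmu]; simp only; rw [e1, e2]
    rcases Nat.lt_or_ge m m' with h3 | h3
    · exact dlt_irrefl _ (hmueq ▸ hmono2 m m' h3 h2)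
    · exact dlt_irrefl _ (hmueq ▸ hmono2 m' m (by omega) h1)
  have hid1 : ∀ M, (∑ b ∈ B, h.coeff.symm (rcM M b) * gfun b) = f - Fs M := by
    intro M
    induction M with
    | zero =>
      have hz : ∀ b ∈ B, h.coeff.symm (rcM 0 b) * gfun b = 0 := by
        intro b _
        have : rcM 0 b = (0 : (Fin n →₀ ℕ) → k) := by
          funext a
          rw [hrcM]
          simp
        rw [this, map_zero, zero_mul]
      rw [Finset.sum_congr rfl hz, Finset.sum_const_zero, hFs0, sub_self]
    | succ M ih =>
      have hstep1 : ∀ b, h.coeff.symm (rcM (M+1) b) = h.coeff.symm (rcM M b) +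
          (if Fs M ≠ 0 ∧ (datf (Fs M)).1 = b then
            (datf (Fs M)).2.2 • h.mono ((datf (Fs M)).2.1) else 0) := by
        intro b
        refine ext_coeff h fun a => ?_
        rw [coeff_add, coeff_symm_apply, coeff_symm_apply, hrcM]
        simp only
        rw [Finset.sum_range_succ]
        congr 1
        by_cases hcb : Fs M ≠ 0 ∧ (datf (Fs M)).1 = b
        · rw [if_pos hcb, coeff_smul, coeff_mono]
          by_cases hta : (datf (Fs M)).2.1 = a
          · rw [if_pos ⟨hcb.1, hcb.2, hta⟩, if_pos hta.symm, mul_one]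
          · rw [if_neg (by tauto), if_neg (fun hh => hta hh.symm), mul_zero]
        · rw [if_neg hcb, if_neg (by tauto), coeff_zero]
      calc (∑ b ∈ B, h.coeff.symm (rcM (M+1) b) * gfun b)
          = (∑ b ∈ B, h.coeff.symm (rcM M b) * gfun b) +
            ∑ b ∈ B, (if Fs M ≠ 0 ∧ (datf (Fs M)).1 = b then
              (datf (Fs M)).2.2 • h.mono ((datf (Fs M)).2.1) else 0) * gfun b := by
            rw [← Finset.sum_add_distrib]
            refine Finset.sum_congr rfl fun b _ => ?_
            rw [hstep1 b, add_mul]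
        _ = f - Fs (M+1) := by
            rw [ih]
            by_cases hM0 : Fs M = 0
            · have hz : ∀ b ∈ B, (if Fs M ≠ 0 ∧ (datf (Fs M)).1 = b then
                  (datf (Fs M)).2.2 • h.mono ((datf (Fs M)).2.1) else 0) * gfun b = 0 := by
                intro b _
                rw [if_neg (by tauto), zero_mul]
              rw [Finset.sum_congr rfl hz, Finset.sum_const_zero, add_zero,
                hdead M hM0, hM0]
            · have hd := hdat (Fs M) hM0 (hsub M).2
              have hz : ∀ b ∈ B, (if Fs M ≠ 0 ∧ (datf (Fs M)).1 = b then
                  (datf (Fs M)).2.2 • h.mono ((datf (Fs M)).2.1) else 0) * gfun b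
                  = (if (datf (Fs M)).1 = b then
                    ((datf (Fs M)).2.2 • h.mono ((datf (Fs M)).2.1)) * gfun b else 0) := by
                intro b _
                by_cases hcb : (datf (Fs M)).1 = b
                · rw [if_pos ⟨hM0, hcb⟩, if_pos hcb]
                · rw [if_neg (by tauto), if_neg hcb, zero_mul]
              rw [Finset.sum_congr rfl hz, Finset.sum_ite_eq B ((datf (Fs M)).1)
                (fun b => ((datf (Fs M)).2.2 • h.mono ((datf (Fs M)).2.1)) * gfun b),
                if_pos hd.1]
              rw [smul_mul_assoc, hFsS M, hnxt]
              simp only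
              abel
  have hkey : f = ∑ b ∈ B, h.coeff.symm (rc b) * gfun b := by
    refine ext_coeff h fun u => ?_
    obtain ⟨M, hMbig⟩ := hbig u
    have hFsMu : h.coeff (Fs M) u = 0 := by
      by_cases hM0 : Fs M = 0
      · rw [hM0, coeff_zero]
      · exact (hdat (Fs M) hM0 (hsub M).2).2.1.2 u (hMbig M le_rfl hM0)
    have e1 : h.coeff f u = h.coeff (∑ b ∈ B, h.coeff.symm (rcM M b) * gfun b) u := by
      rw [hid1 M, coeff_sub, hFsMu, sub_zero]
    rw [e1, coeff_finsum h, coeff_finsum h]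
    refine Finset.sum_congr rfl fun b hb => ?_
    rw [h.coeff_mul, h.coeff_mul]
    refine Finset.sum_congr rfl fun p hp => ?_
    rw [Finset.HasAntidiagonal.mem_antidiagonal] at hp
    rw [coeff_symm_apply, coeff_symm_apply]
    by_cases hdiff : rcM M b p.1 = rc b p.1
    · rw [hdiff]
    · have hm : ∃ m, M ≤ m ∧ Fs m ≠ 0 ∧ (datf (Fs m)).1 = b ∧ (datf (Fs m)).2.1 = p.1 := by
        by_cases hex : ∃ m, Fs m ≠ 0 ∧ (datf (Fs m)).1 = b ∧ (datf (Fs m)).2.1 = p.1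
        · obtain ⟨hlv, hb1, ht1⟩ := hex.choose_spec
          rcases Nat.lt_or_ge hex.choose M with h1 | h1
          · exfalso
            refine hdiff ?_
            rw [hrc]
            simp only
            rw [dif_pos hex, hrcM]
            simp only
            rw [Finset.sum_eq_single hex.choose]
            · rw [if_pos ⟨hlv, hb1, ht1⟩]
            · intro m hmr hmne
              rw [if_neg]
              rintro ⟨hlv', hb1', ht1'⟩
              exact hmne (huniq m hex.choose hlv' hlv (hb1'.trans hb1.symm)
                (ht1'.trans ht1.symm))
            · intro hnm
              exact absurd (Finset.mem_range.mpr h1) hnm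
          · exact ⟨hex.choose, h1, hlv, hb1, ht1⟩
        · exfalso
          refine hdiff ?_
          rw [hrc]
          simp only
          rw [dif_neg hex, hrcM]
          simp only
          refine Finset.sum_eq_zero fun m _ => ?_
          rw [if_neg (fun hcm => hex ⟨m, hcm⟩)]
      obtain ⟨m, hMm, hlv, hbm, htm⟩ := hm
      have hg0 : h.coeff (gfun b) p.2 = 0 := by
        by_contra hnz
        have hnd : ¬ dlt p.2 b := fun hdd => hnz ((hgfunLt b hb).2 _ hdd)
        have hdu : dlt u (mu m) := hMbig m hMm hlv
        rw [hmu] at hdu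
        simp only at hdu
        rw [hbm, htm] at hdu
        rw [← hp] at hdu
        exact hnd (dlt_of_dlt_add_left hdu)
      rw [hg0, mul_zero, zero_mul, mul_zero, zero_mul]
  rw [hkey]
  exact sum_mem fun b hb => I.mul_mem_left _ _ (hgfunI b hb)

end Closed
section Class
variable {k : Type*} [Field k] {n : ℕ} {Q : QMatrix k n}
variable {R : Type*} [Ring R] [Algebra k R] (h : IsQPowerSeriesRing Q R)

/-- an exponent avoids the variables in `w` -/
def OffW (w : Finset (Fin n)) (u : Fin n →₀ ℕ) : Prop := ∀ i ∈ w, u i = 0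

/-- the character (class invariant) of an exponent -/
def chv (Q : QMatrix k n) (w : Finset (Fin n)) (u : Fin n →₀ ℕ) : Fin n → k :=
  fun i => if i ∈ w then 1 else sigN Q (Finsupp.single i 1) u

lemma sigN_left_eq (w : Finset (Fin n)) {s u u' : Fin n →₀ ℕ} (hs : OffW w s)
    (hc : chv Q w u = chv Q w u') : sigN Q s u = sigN Q s u' := by
  rw [sigN_expand_left Q s u, sigN_expand_left Q s u']
  refine Finset.prod_congr rfl fun i _ => ?_
  by_cases hsi : s i = 0
  · rw [hsi, pow_zero, pow_zero]
  · have hiw : i ∉ w := fun hiw => hsi (hs i hiw)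
    have := congrFun hc i
    rw [chv, chv, if_neg hiw, if_neg hiw] at this
    rw [this]

lemma sigN_single_inv (Q : QMatrix k n) (a : Fin n →₀ ℕ) (j : Fin n) :
    sigN Q a (Finsupp.single j 1) = (sigN Q (Finsupp.single j 1) a)⁻¹ :=
  eq_inv_of_mul_eq_one_left (sigN_mul_symm Q a (Finsupp.single j 1))

lemma sigN_right_eq (w : Finset (Fin n)) {u a a' : Fin n →₀ ℕ} (hu : OffW w u)
    (hc : chv Q w a = chv Q w a') : sigN Q a u = sigN Q a' u := by
  rw [sigN_expand_right Q a u, sigN_expand_right Q a' u]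
  refine Finset.prod_congr rfl fun j _ => ?_
  by_cases huj : u j = 0
  · rw [huj, pow_zero, pow_zero]
  · have hjw : j ∉ w := fun hjw => huj (hu j hjw)
    have := congrFun hc j
    rw [chv, chv, if_neg hjw, if_neg hjw] at this
    rw [sigN_single_inv, sigN_single_inv, this]

lemma sum_antidiagonal_swap (s : Fin n →₀ ℕ) (F : (Fin n →₀ ℕ) × (Fin n →₀ ℕ) → k) :
    ∑ p ∈ Finset.HasAntidiagonal.antidiagonal s, F p = ∑ p ∈ Finset.HasAntidiagonal.antidiagonal s, F (p.2, p.1) := by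
  refine Finset.sum_nbij' (fun p => (p.2, p.1)) (fun p => (p.2, p.1)) ?_ ?_ ?_ ?_ ?_ <;>
    simp [Finset.HasAntidiagonal.mem_antidiagonal, add_comm]

lemma exchange_right (w : Finset (Fin n)) (χ : Fin n → k) (y r : R)
    (hy : ∀ a, h.coeff y a ≠ 0 → OffW w a ∧ chv Q w a = χ)
    (hr : ∀ a, h.coeff r a ≠ 0 → OffW w a) :
    ∃ r' : R, r * y = y * r' := by
  classical
  by_cases hy0 : y = 0
  · exact ⟨0, by rw [hy0, mul_zero, zero_mul]⟩
  obtain ⟨a₀, ha₀⟩ : ∃ a₀, h.coeff y a₀ ≠ 0 := by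
    by_contra hc
    push_neg at hc
    exact hy0 (ext_coeff h fun u => by rw [hc u, coeff_zero])
  refine ⟨scale h (fun a => sigN Q a a₀) r, ext_coeff h fun s => ?_⟩
  rw [h.coeff_mul, h.coeff_mul, sum_antidiagonal_swap]
  refine Finset.sum_congr rfl fun p hp => ?_
  rw [coeff_scale]
  by_cases h1 : h.coeff r p.2 = 0
  · rw [h1]; ring
  by_cases h2 : h.coeff y p.1 = 0
  · rw [h2]; ring
  have key : Q.weight p.2 p.1 = sigN Q p.2 a₀ * Q.weight p.1 p.2 := by
    rw [weight_eq_sigN_mul Q p.2 p.1]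
    congr 1
    exact sigN_left_eq w (hr p.2 h1) ((hy p.1 h2).2.trans (hy a₀ ha₀).2.symm)
  rw [key]
  ring

lemma exchange_left (w : Finset (Fin n)) (χ : Fin n → k) (y r : R)
    (hy : ∀ a, h.coeff y a ≠ 0 → OffW w a ∧ chv Q w a = χ)
    (hr : ∀ a, h.coeff r a ≠ 0 → OffW w a) :
    ∃ r' : R, y * r = r' * y := by
  classical
  by_cases hy0 : y = 0
  · exact ⟨0, by rw [hy0, mul_zero, zero_mul]⟩
  obtain ⟨a₀, ha₀⟩ : ∃ a₀, h.coeff y a₀ ≠ 0 := by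
    by_contra hc
    push_neg at hc
    exact hy0 (ext_coeff h fun u => by rw [hc u, coeff_zero])
  refine ⟨scale h (fun b => sigN Q a₀ b) r, ext_coeff h fun s => ?_⟩
  rw [h.coeff_mul, h.coeff_mul, sum_antidiagonal_swap]
  refine Finset.sum_congr rfl fun p hp => ?_
  rw [coeff_scale]
  by_cases h1 : h.coeff y p.2 = 0
  · rw [h1]; ring
  by_cases h2 : h.coeff r p.1 = 0
  · rw [h2]; ring
  have key : Q.weight p.2 p.1 = sigN Q a₀ p.1 * Q.weight p.1 p.2 := by
    rw [weight_eq_sigN_mul Q p.2 p.1]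
    congr 1
    exact sigN_right_eq w (hr p.1 h2) ((hy p.2 h1).2.trans (hy a₀ ha₀).2.symm)
  rw [key]
  ring

open scoped Classical in
/-- the part of `f` supported on exponents avoiding `w` -/
noncomputable def offPart (w : Finset (Fin n)) (f : R) : R :=
  h.coeff.symm fun u => if OffW w u then h.coeff f u else 0

open scoped Classical in
lemma coeff_offPart (w : Finset (Fin n)) (f : R) (u : Fin n →₀ ℕ) :
    h.coeff (offPart h w f) u = if OffW w u then h.coeff f u else 0 := by
  rw [offPart, coeff_symm_apply]

open scoped Classical in
/-- the part of `f` supported on exponents avoiding `w` and lying in the class `χ` -/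
noncomputable def classPart (w : Finset (Fin n)) (χ : Fin n → k) (f : R) : R :=
  h.coeff.symm fun u => if OffW w u ∧ chv Q w u = χ then h.coeff f u else 0

open scoped Classical in
lemma coeff_classPart (w : Finset (Fin n)) (χ : Fin n → k) (f : R) (u : Fin n →₀ ℕ) :
    h.coeff (classPart h w χ f) u
      = if OffW w u ∧ chv Q w u = χ then h.coeff f u else 0 := by
  rw [classPart, coeff_symm_apply]

lemma mem_of_supp_touches (P : TwoSidedIdeal R) :
    ∀ w : Finset (Fin n), (∀ i ∈ w, h.X i ∈ P) →
      ∀ g : R, (∀ u, h.coeff g u ≠ 0 → ∃ i ∈ w, u i ≠ 0) → g ∈ P := by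
  classical
  intro w
  induction w using Finset.induction_on with
  | empty =>
    intro _ g hsupp
    have : g = 0 := ext_coeff h fun u => by
      rw [coeff_zero]
      by_contra hc
      obtain ⟨i, hi, _⟩ := hsupp u hc
      exact absurd hi (Finset.notMem_empty i)
    rw [this]
    exact P.zero_mem
  | @insert i w' hni ih =>
    intro hw g hsupp
    set g₁ : R := h.coeff.symm (fun u => if u i ≠ 0 then h.coeff g u else 0) with hg₁
    obtain ⟨f1, hf1⟩ : ∃ f1, g₁ = h.X i * f1 := by
      refine exists_X_mul h i g₁ fun u hu => ?_
      rw [hg₁, coeff_symm_apply] at hu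
      by_cases hui : u i ≠ 0
      · exact hui
      · rw [if_neg hui] at hu
        exact absurd rfl hu
    have hg₁P : g₁ ∈ P := by
      rw [hf1]
      exact P.mul_mem_right _ _ (hw i (Finset.mem_insert_self i w'))
    have hrest : g - g₁ ∈ P := by
      refine ih (fun j hj => hw j (Finset.mem_insert_of_mem hj)) _ fun u hu => ?_
      rw [coeff_sub, hg₁, coeff_symm_apply] at hu
      by_cases hui : u i ≠ 0
      · rw [if_pos hui, sub_self] at hu
        exact absurd rfl hu
      · rw [if_neg hui, sub_zero] at hu
        obtain ⟨j, hj, hj'⟩ := hsupp u hu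
        rcases Finset.mem_insert.mp hj with rfl | hj2
        · exact absurd hj' hui
        · exact ⟨j, hj2, hj'⟩
    have : g = g₁ + (g - g₁) := by abel
    rw [this]
    exact P.add_mem hg₁P hrest

lemma sub_offPart_mem (P : TwoSidedIdeal R) (w : Finset (Fin n))
    (hw : ∀ i ∈ w, h.X i ∈ P) (f : R) : f - offPart h w f ∈ P := by
  classical
  refine mem_of_supp_touches h P w hw _ fun u hu => ?_
  rw [coeff_sub, coeff_offPart] at hu
  by_cases hoff : OffW w u
  · rw [if_pos hoff, sub_self] at hu
    exact absurd rfl hu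
  · rw [OffW] at hoff
    push_neg at hoff
    obtain ⟨i, hi, hi'⟩ := hoff
    exact ⟨i, hi, hi'⟩

lemma mono_offw_not_mem {P : TwoSidedIdeal R} (hP : IsPrimeTwoSided P)
    {w : Finset (Fin n)} (hwP : ∀ i, h.X i ∈ P → i ∈ w) {s : Fin n →₀ ℕ}
    (hs : OffW w s) : h.mono s ∉ P := by
  intro hmem
  obtain ⟨i, hi, hXi⟩ := X_mem_of_mono_mem h hP hmem
  exact hi (hs i (hwP i hXi))

/-- "φ preserves P" : coefficientwise multiplication by φ maps P into P -/
def PresV (P : TwoSidedIdeal R) (φ : (Fin n →₀ ℕ) → k) : Prop :=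
  ∀ g ∈ P, scale h φ g ∈ P

lemma presV_mul {P : TwoSidedIdeal R} {φ ψ : (Fin n →₀ ℕ) → k}
    (h1 : PresV h P φ) (h2 : PresV h P ψ) : PresV h P (fun u => φ u * ψ u) := by
  intro g hg
  have := h1 _ (h2 g hg)
  rwa [scale_scale] at this

lemma presV_const (P : TwoSidedIdeal R) (c : k) : PresV h P (fun _ => c) := by
  intro g hg
  have : scale h (fun _ => c) g = c • g := ext_coeff h fun u => by
    rw [coeff_scale, coeff_smul]
  rw [this]
  exact ksmul_mem P c hg

lemma presV_smul {P : TwoSidedIdeal R} (c : k) {φ : (Fin n →₀ ℕ) → k}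
    (h1 : PresV h P φ) : PresV h P (fun u => c * φ u) := by
  intro g hg
  have : scale h (fun u => c * φ u) g = c • scale h φ g := ext_coeff h fun u => by
    rw [coeff_scale, coeff_smul, coeff_scale, mul_assoc]
  rw [this]
  exact ksmul_mem P c (h1 g hg)

lemma presV_sub {P : TwoSidedIdeal R} {φ ψ : (Fin n →₀ ℕ) → k}
    (h1 : PresV h P φ) (h2 : PresV h P ψ) : PresV h P (fun u => φ u - ψ u) := by
  intro g hg
  have : scale h (fun u => φ u - ψ u) g = scale h φ g - scale h ψ g :=
    ext_coeff h fun u => by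
      rw [coeff_scale, coeff_sub, coeff_scale, coeff_scale, sub_mul]
  rw [this]
  exact P.sub_mem (h1 g hg) (h2 g hg)

lemma presV_sig {P : TwoSidedIdeal R} (hP : IsPrimeTwoSided P)
    {w : Finset (Fin n)} (hwP : ∀ i, h.X i ∈ P → i ∈ w) {s : Fin n →₀ ℕ}
    (hs : OffW w s) : PresV h P (fun u => sigN Q s u) :=
  fun g hg => gam_mem h hP s (mono_offw_not_mem h hP hwP hs) hg

lemma presV_prod {P : TwoSidedIdeal R} {ι : Type*} (T : Finset ι)
    (φs : ι → (Fin n →₀ ℕ) → k) (hφ : ∀ t ∈ T, PresV h P (φs t)) :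
    PresV h P (fun u => ∏ t ∈ T, φs t u) := by
  classical
  induction T using Finset.induction_on with
  | empty => simpa using presV_const h P 1
  | @insert t T' hnt ih =>
    have e : (fun u => ∏ x ∈ insert t T', φs x u)
        = fun u => φs t u * ∏ x ∈ T', φs x u := by
      funext u
      rw [Finset.prod_insert hnt]
    rw [e]
    exact presV_mul h (hφ t (Finset.mem_insert_self t T'))
      (ih fun x hx => hφ x (Finset.mem_insert_of_mem hx))

open scoped Classical in
lemma classPart_mem (hn : 0 < n) {P : TwoSidedIdeal R} (hP : IsPrimeTwoSided P)
    (w : Finset (Fin n)) (hwP : ∀ i, h.X i ∈ P → i ∈ w)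
    {f : R} (hf : f ∈ P) (hfoff : ∀ u, h.coeff f u ≠ 0 → OffW w u)
    (χ : Fin n → k) : classPart h w χ f ∈ P := by
  classical
  by_cases hχ : ∃ u, h.coeff f u ≠ 0 ∧ chv Q w u = χ
  case neg =>
    have hz : classPart h w χ f = 0 := ext_coeff h fun u => by
      rw [coeff_classPart, coeff_zero]
      by_cases hc : OffW w u ∧ chv Q w u = χ
      · rw [if_pos hc]
        by_contra hne
        exact hχ ⟨u, hne, hc.2⟩
      · rw [if_neg hc]
    rw [hz]
    exact P.zero_mem
  case pos =>
  obtain ⟨u₀, hu₀, hu₀χ⟩ := hχ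
  have hχw : ∀ i ∈ w, χ i = 1 := by
    intro i hi
    have := congrFun hu₀χ i
    rw [chv, if_pos hi] at this
    exact this.symm
  refine mem_of_approx h P _ (fun m => ?_)
  set T : Finset (Fin n → k) :=
    ((finite_deg_le n m).toFinset.filter (fun u => h.coeff f u ≠ 0)).image (chv Q w) with hT
  have hsep0 : ∀ χ' ∈ T, χ' ≠ χ → ∃ i, i ∉ w ∧ χ' i ≠ χ i := by
    intro χ' hχ' hne
    obtain ⟨u', _, rfl⟩ := Finset.mem_image.mp hχ'
    by_contra hcc
    push_neg at hcc
    refine hne (funext fun i => ?_)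
    by_cases hiw : i ∈ w
    · rw [chv, if_pos hiw, hχw i hiw]
    · exact hcc i hiw
  have hsep : ∀ χ' : Fin n → k, ∃ i, χ' ∈ T → χ' ≠ χ → (i ∉ w ∧ χ' i ≠ χ i) := by
    intro χ'
    by_cases hx : χ' ∈ T ∧ χ' ≠ χ
    · obtain ⟨i, hi⟩ := hsep0 χ' hx.1 hx.2
      exact ⟨i, fun _ _ => hi⟩
    · exact ⟨⟨0, hn⟩, fun h1 h2 => absurd ⟨h1, h2⟩ hx⟩
  choose iv hiv using hsep
  have hivw : ∀ χ' ∈ T, χ' ≠ χ → iv χ' ∉ w := fun χ' h1 h2 => (hiv χ' h1 h2).1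
  have hivne : ∀ χ' ∈ T, χ' ≠ χ → χ' (iv χ') ≠ χ (iv χ') := fun χ' h1 h2 => (hiv χ' h1 h2).2
  set μ : (Fin n →₀ ℕ) → k := fun u => ∏ χ' ∈ T.erase χ,
    ((χ (iv χ') - χ' (iv χ'))⁻¹ *
      (sigN Q (Finsupp.single (iv χ') 1) u - χ' (iv χ'))) with hμ
  have hμval : ∀ v, μ v = ∏ χ' ∈ T.erase χ,
      ((χ (iv χ') - χ' (iv χ'))⁻¹ *
        (sigN Q (Finsupp.single (iv χ') 1) v - χ' (iv χ'))) := fun v => rfl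
  have hpres : PresV h P μ := by
    refine presV_prod h (T.erase χ) _ fun χ' hχ' => ?_
    have h1 := hivw χ' (Finset.mem_of_mem_erase hχ') (Finset.ne_of_mem_erase hχ')
    refine presV_smul h _ (presV_sub h ?_ (presV_const h P _))
    refine presV_sig h hP hwP ?_
    intro j hj
    exact Finsupp.single_eq_of_ne (fun hc => h1 (hc ▸ hj))
  refine ⟨scale h μ f, hpres f hf, fun u hdeg => ?_⟩
  rw [coeff_classPart, coeff_scale]
  by_cases hfu : h.coeff f u = 0
  · rw [hfu, mul_zero]
    split_ifs <;> rfl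
  · have hoffu : OffW w u := hfoff u hfu
    have hmemT : chv Q w u ∈ T := Finset.mem_image.mpr
      ⟨u, Finset.mem_filter.mpr ⟨(finite_deg_le n m).mem_toFinset.mpr hdeg, hfu⟩, rfl⟩
    have hchvval : ∀ i, i ∉ w → sigN Q (Finsupp.single i 1) u = chv Q w u i := by
      intro i hiw
      rw [chv, if_neg hiw]
    by_cases hcu : chv Q w u = χ
    · rw [if_pos ⟨hoffu, hcu⟩, hμval u]
      have hone : (∏ χ' ∈ T.erase χ,
          ((χ (iv χ') - χ' (iv χ'))⁻¹ *
            (sigN Q (Finsupp.single (iv χ') 1) u - χ' (iv χ')))) = 1 := by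
        refine Finset.prod_eq_one fun χ' hχ' => ?_
        have hT' := Finset.mem_of_mem_erase hχ'
        have hne' := Finset.ne_of_mem_erase hχ'
        have h1 := hivw χ' hT' hne'
        have h2 := hivne χ' hT' hne'
        rw [hchvval _ h1, hcu]
        exact inv_mul_cancel₀ (sub_ne_zero_of_ne (fun hc => h2 hc.symm))
      rw [hone, one_mul]
    · rw [if_neg (fun hc => hcu hc.2), hμval u]
      have hzero : (∏ χ' ∈ T.erase χ,
          ((χ (iv χ') - χ' (iv χ'))⁻¹ *
            (sigN Q (Finsupp.single (iv χ') 1) u - χ' (iv χ')))) = 0 := by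
        refine Finset.prod_eq_zero (Finset.mem_erase.mpr ⟨hcu, hmemT⟩) ?_
        have hT' : chv Q w u ∈ T := hmemT
        have h1 := hivw _ hT' hcu
        rw [hchvval _ h1, sub_self, mul_zero]
      rw [hzero, zero_mul]

open scoped Classical in
lemma exists_classPart_not_mem (P₀ : TwoSidedIdeal R) {w : Finset (Fin n)} {f : R}
    (hf : f ∉ P₀) (hfoff : ∀ u, h.coeff f u ≠ 0 → OffW w u) :
    ∃ χ : Fin n → k, classPart h w χ f ∉ P₀ := by
  classical
  by_contra hc
  push_neg at hc
  refine hf (mem_of_approx h P₀ f fun m => ?_)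
  set T : Finset (Fin n → k) :=
    ((finite_deg_le n m).toFinset.filter (fun u => h.coeff f u ≠ 0)).image (chv Q w) with hT
  refine ⟨∑ χ ∈ T, classPart h w χ f, sum_mem fun χ _ => hc χ, fun u hdeg => ?_⟩
  rw [coeff_finsum]
  by_cases hfu : h.coeff f u = 0
  · rw [hfu]
    refine (Finset.sum_eq_zero fun χ _ => ?_).symm
    rw [coeff_classPart]
    split_ifs <;> simp [hfu]
  · have hoffu := hfoff u hfu
    have hmemT : chv Q w u ∈ T := Finset.mem_image.mpr
      ⟨u, Finset.mem_filter.mpr ⟨(finite_deg_le n m).mem_toFinset.mpr hdeg, hfu⟩, rfl⟩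
    rw [Finset.sum_eq_single (chv Q w u)]
    · rw [coeff_classPart, if_pos ⟨hoffu, rfl⟩]
    · intro χ hχT hne
      rw [coeff_classPart, if_neg (fun hcc => hne hcc.2.symm)]
    · intro hnm
      exact absurd hmemT hnm

end Class
end StmtAux
/-- The prime spectrum of `R` is normally separated: whenever
`P₀ ⊊ P₁` are prime two-sided ideals of `R`, there exists `y ∈ P₁ \ P₀` that is normal
modulo `P₀`, i.e. `Ry + P₀ = yR + P₀`. -/
theorem stmt_15 {k : Type*} [Field k] {n : ℕ} (hn : 0 < n) (Q : QMatrix k n)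
    (R : Type*) [Ring R] [Algebra k R] (h : IsQPowerSeriesRing Q R)
    (P₀ P₁ : TwoSidedIdeal R) (hP₀ : IsPrimeTwoSided P₀) (hP₁ : IsPrimeTwoSided P₁)
    (hlt : P₀ < P₁) :
    ∃ y ∈ P₁, y ∉ P₀ ∧
      {a : R | ∃ r : R, ∃ p ∈ P₀, a = r * y + p} =
        {a : R | ∃ r : R, ∃ p ∈ P₀, a = y * r + p} := by
  classical
  obtain ⟨f, hfP₁, hfP₀⟩ := Set.exists_of_ssubset ((TwoSidedIdeal.lt_iff P₀ P₁).mp hlt)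
  by_cases hcase : ∃ i, h.X i ∈ P₁ ∧ h.X i ∉ P₀
  · obtain ⟨i, hX1, hX0⟩ := hcase
    refine ⟨h.X i, hX1, hX0, ?_⟩
    ext a
    simp only [Set.mem_setOf_eq]
    constructor
    · rintro ⟨r, p, hp, rfl⟩
      refine ⟨StmtAux.gamInv h (Finsupp.single i 1) r, p, hp, ?_⟩
      rw [show h.X i = h.mono (Finsupp.single i 1) from rfl, StmtAux.mul_mono h r]
    · rintro ⟨r, p, hp, rfl⟩
      refine ⟨StmtAux.gam h (Finsupp.single i 1) r, p, hp, ?_⟩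
      rw [show h.X i = h.mono (Finsupp.single i 1) from rfl, StmtAux.mono_mul h]
  · push_neg at hcase
    set w : Finset (Fin n) := Finset.univ.filter (fun i => h.X i ∈ P₁) with hw
    have hw0 : ∀ i ∈ w, h.X i ∈ P₀ := fun i hi => hcase i (Finset.mem_filter.mp hi).2
    have hwP : ∀ i, h.X i ∈ P₁ → i ∈ w := fun i hXi =>
      Finset.mem_filter.mpr ⟨Finset.mem_univ i, hXi⟩
    have hle : ∀ {x : R}, x ∈ P₀ → x ∈ P₁ := fun hx =>
      (TwoSidedIdeal.le_iff.mp hlt.le) hx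
    set f' := StmtAux.offPart h w f with hf'
    have hsub0 : f - f' ∈ P₀ := StmtAux.sub_offPart_mem h P₀ w hw0 f
    have hf'P₁ : f' ∈ P₁ := by
      have he : f' = f - (f - f') := by abel
      rw [he]
      exact P₁.sub_mem hfP₁ (hle hsub0)
    have hf'P₀ : f' ∉ P₀ := by
      intro hmem
      refine hfP₀ ?_
      have he : f = (f - f') + f' := by abel
      rw [he]
      exact P₀.add_mem hsub0 hmem
    have hf'off : ∀ u, h.coeff f' u ≠ 0 → StmtAux.OffW w u := by
      intro u hu
      rw [hf', StmtAux.coeff_offPart] at hu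
      by_cases hc : StmtAux.OffW w u
      · exact hc
      · rw [if_neg hc] at hu
        exact absurd rfl hu
    obtain ⟨χ, hyP₀⟩ := StmtAux.exists_classPart_not_mem h P₀ hf'P₀ hf'off
    have hyP₁ : StmtAux.classPart h w χ f' ∈ P₁ :=
      StmtAux.classPart_mem h hn hP₁ w hwP hf'P₁ hf'off χ
    set y := StmtAux.classPart h w χ f' with hy
    have hysupp : ∀ a, h.coeff y a ≠ 0 → StmtAux.OffW w a ∧ StmtAux.chv Q w a = χ := by
      intro a ha
      rw [hy, StmtAux.coeff_classPart] at ha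
      by_cases hc : StmtAux.OffW w a ∧ StmtAux.chv Q w a = χ
      · exact hc
      · rw [if_neg hc] at ha
        exact absurd rfl ha
    refine ⟨y, hyP₁, hyP₀, ?_⟩
    have hoffr : ∀ r : R, ∀ b, h.coeff (StmtAux.offPart h w r) b ≠ 0 → StmtAux.OffW w b := by
      intro r b hb
      rw [StmtAux.coeff_offPart] at hb
      by_cases hc : StmtAux.OffW w b
      · exact hc
      · rw [if_neg hc] at hb
        exact absurd rfl hb
    ext a
    simp only [Set.mem_setOf_eq]
    constructor
    · rintro ⟨r, p, hp, rfl⟩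
      obtain ⟨r', hr'⟩ := StmtAux.exchange_right h w χ y (StmtAux.offPart h w r) hysupp (hoffr r)
      refine ⟨r', (r - StmtAux.offPart h w r) * y + p,
        P₀.add_mem (P₀.mul_mem_right _ _ (StmtAux.sub_offPart_mem h P₀ w hw0 r)) hp, ?_⟩
      have he : r * y = StmtAux.offPart h w r * y + (r - StmtAux.offPart h w r) * y := by
        rw [← add_mul]
        congr 1
        abel
      rw [he, hr', add_assoc]
    · rintro ⟨r, p, hp, rfl⟩
      obtain ⟨r', hr'⟩ := StmtAux.exchange_left h w χ y (StmtAux.offPart h w r) hysupp (hoffr r)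
      refine ⟨r', y * (r - StmtAux.offPart h w r) + p,
        P₀.add_mem (P₀.mul_mem_left _ _ (StmtAux.sub_offPart_mem h P₀ w hw0 r)) hp, ?_⟩
      have he : y * r = y * StmtAux.offPart h w r + y * (r - StmtAux.offPart h w r) := by
        rw [← mul_add]
        congr 1
        abel
      rw [he, hr', add_assoc]

end
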